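/- Double smash product: with C, H and the two commuting actions ⊳, ⊳̃ as in the context, the k-module D := C ⊗ H equipped with the multiplication determined k-bilinearly by (c ⊗ h)·(c' ⊗ h') := c·(h⁽¹⁾ ⊳ (h⁽³⁾ ⊳̃ c')) ⊗ h⁽²⁾h' is an associative unital algebra with unit 1 ⊗ 1; moreover the maps c ↦ c ⊗ 1 and h ↦ 1 ⊗ h are injective algebra homomorphisms C → D and H → D, and (c ⊗ 1)·(1 ⊗ h) = c ⊗ h. -/

import Mathlib

open TensorProduct

noncomputable section

/-- Given two `End`-valued linear maps `act, actT` on `H`, the map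
`H ⊗ H → End(C)`, `h₁ ⊗ h₃ ↦ (act h₁) ∘ (actT h₃)`. -/
def sandwich {k H C : Type*} [CommSemiring k] [AddCommMonoid H] [Module k H]
    [AddCommMonoid C] [Module k C]
    (act actT : H →ₗ[k] Module.End k C) : H ⊗[k] H →ₗ[k] Module.End k C :=
  (LinearMap.mul' k (Module.End k C)) ∘ₗ TensorProduct.map act actT

/-- The rearrangement `(h₁ ⊗ h₂) ⊗ h₃ ↦ (h₁ ⊗ h₃) ⊗ h₂`. -/
def rearr (k H : Type*) [CommSemiring k] [AddCommMonoid H] [Module k H] :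
    ((H ⊗[k] H) ⊗[k] H) →ₗ[k] ((H ⊗[k] H) ⊗[k] H) :=
  (TensorProduct.assoc k H H H).symm.toLinearMap ∘ₗ
    (LinearMap.lTensor H (TensorProduct.comm k H H).toLinearMap) ∘ₗ
    (TensorProduct.assoc k H H H).toLinearMap

/-- For `f, g : X → End(Y)`, the map `X ⊗ X → End(Y ⊗ Y)`, `x ⊗ x' ↦ (f x) ⊗ (g x')`;
used to express module-algebra (measuring) conditions in Sweedler-free form. -/
def pairEndo {k X Y : Type*} [CommSemiring k] [AddCommMonoid X] [Module k X]
    [AddCommMonoid Y] [Module k Y]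
    (f g : X →ₗ[k] Module.End k Y) : X ⊗[k] X →ₗ[k] (Y ⊗[k] Y →ₗ[k] Y ⊗[k] Y) :=
  (TensorProduct.homTensorHomMap (RingHom.id k) Y Y Y Y) ∘ₗ TensorProduct.map f g

namespace S14

section Coalg

variable (k H : Type*) [CommSemiring k] [Semiring H] [Bialgebra k H]

/-- `h ↦ (h¹ ⊗ h³) ⊗ h²` -/
def Phi : H →ₗ[k] (H ⊗[k] H) ⊗[k] H :=
  rearr k H ∘ₗ LinearMap.rTensor H (Coalgebra.comul (R := k)) ∘ₗ Coalgebra.comul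

variable {k H}

lemma rearr_tmul (a b g : H) : rearr k H ((a ⊗ₜ[k] b) ⊗ₜ[k] g) = (a ⊗ₜ[k] g) ⊗ₜ[k] b := by
  simp [rearr]

lemma rearr_eq_alg : rearr k H =
    ((Algebra.TensorProduct.assoc k k k H H H).symm.toAlgHom.comp
      ((Algebra.TensorProduct.map (AlgHom.id k H)
        (Algebra.TensorProduct.comm k H H).toAlgHom).comp
        (Algebra.TensorProduct.assoc k k k H H H).toAlgHom)).toLinearMap := by
  apply TensorProduct.ext
  apply TensorProduct.ext
  ext a b g
  simp [rearr]

lemma rearr_mul (u v : (H ⊗[k] H) ⊗[k] H) :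
    rearr k H (u * v) = rearr k H u * rearr k H v := by
  rw [rearr_eq_alg]; simp only [AlgHom.toLinearMap_apply, map_mul]

lemma rTensor_comul_eq_alg : LinearMap.rTensor H (Coalgebra.comul (R := k) (A := H)) =
    (Algebra.TensorProduct.map (Bialgebra.comulAlgHom k H) (AlgHom.id k H)).toLinearMap := by
  apply TensorProduct.ext
  ext a b
  simp

lemma rTensor_comul_mul (u v : H ⊗[k] H) :
    LinearMap.rTensor H (Coalgebra.comul (R := k)) (u * v) =
      LinearMap.rTensor H (Coalgebra.comul (R := k)) u *
        LinearMap.rTensor H (Coalgebra.comul (R := k)) v := by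
  rw [rTensor_comul_eq_alg]; simp only [AlgHom.toLinearMap_apply, map_mul]

lemma Phi_mul (g h : H) : Phi k H (g * h) = Phi k H g * Phi k H h := by
  simp only [Phi, LinearMap.comp_apply, Bialgebra.comul_mul, rTensor_comul_mul, rearr_mul]

lemma Phi_one : Phi k H 1 = ((1 : H) ⊗ₜ[k] (1 : H)) ⊗ₜ[k] (1 : H) := by
  simp [Phi, Algebra.TensorProduct.one_def, rearr_tmul]

/- ### canonical iterated comultiplications and the rearrangement `sg` -/

variable (k H) in
def D2 : H →ₗ[k] H ⊗[k] (H ⊗[k] H) :=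
  LinearMap.lTensor H (Coalgebra.comul (R := k)) ∘ₗ Coalgebra.comul

variable (k H) in
def D3 : H →ₗ[k] H ⊗[k] (H ⊗[k] (H ⊗[k] H)) :=
  LinearMap.lTensor H (D2 k H) ∘ₗ Coalgebra.comul

variable (k H) in
def D4 : H →ₗ[k] H ⊗[k] (H ⊗[k] (H ⊗[k] (H ⊗[k] H))) :=
  LinearMap.lTensor H (D3 k H) ∘ₗ Coalgebra.comul

variable (k H) in
/-- `x ⊗ (u ⊗ z) ↦ (x ⊗ z) ⊗ u` -/
def sg (X : Type*) [AddCommMonoid X] [Module k X] :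
    H ⊗[k] (X ⊗[k] H) →ₗ[k] (H ⊗[k] H) ⊗[k] X :=
  (TensorProduct.assoc k H H X).symm.toLinearMap ∘ₗ
    LinearMap.lTensor H (TensorProduct.comm k X H).toLinearMap

lemma sg_tmul (X : Type*) [AddCommMonoid X] [Module k X] (x z : H) (u : X) :
    sg k H X (x ⊗ₜ[k] (u ⊗ₜ[k] z)) = (x ⊗ₜ[k] z) ⊗ₜ[k] u := by
  simp [sg]


lemma swap_fg {M N P Q : Type*} [AddCommMonoid M] [Module k M] [AddCommMonoid N] [Module k N]
    [AddCommMonoid P] [Module k P] [AddCommMonoid Q] [Module k Q]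
    (f : M →ₗ[k] P) (g : N →ₗ[k] Q) (x : M ⊗[k] N) :
    LinearMap.rTensor Q f (LinearMap.lTensor M g x) =
      LinearMap.lTensor P g (LinearMap.rTensor N f x) := by
  rw [← LinearMap.comp_apply, ← LinearMap.comp_apply,
    LinearMap.rTensor_comp_lTensor, LinearMap.lTensor_comp_rTensor]

/-- coassociativity in convenient form -/
lemma co1 : LinearMap.rTensor H (Coalgebra.comul (R := k) (A := H)) ∘ₗ Coalgebra.comul =
    (TensorProduct.assoc k H H H).symm.toLinearMap ∘ₗ D2 k H := by
  rw [D2, ← Coalgebra.coassoc (R := k) (A := H)]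
  rw [← LinearMap.comp_assoc, ← LinearMap.comp_assoc]
  simp

lemma rearr_assoc_symm :
    rearr k H ∘ₗ (TensorProduct.assoc k H H H).symm.toLinearMap = sg k H H := by
  apply TensorProduct.ext
  ext x y z
  simp [rearr, sg]

lemma Phi_eq : Phi k H = sg k H H ∘ₗ D2 k H := by
  rw [Phi, co1, ← LinearMap.comp_assoc, rearr_assoc_symm]

variable (k H) in
/-- `a ⊗ b ↦ (a¹ ⊗ b²) ⊗ (a² ⊗ b¹)` -/
def Wmap : H ⊗[k] H →ₗ[k] (H ⊗[k] H) ⊗[k] (H ⊗[k] H) :=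
  (TensorProduct.tensorTensorTensorComm k H H H H).toLinearMap ∘ₗ
    TensorProduct.map (Coalgebra.comul (R := k))
      ((TensorProduct.comm k H H).toLinearMap ∘ₗ Coalgebra.comul (R := k))

lemma nat1 {Y : Type*} [AddCommMonoid Y] [Module k Y] (f : H →ₗ[k] Y) :
    TensorProduct.map (LinearMap.id (R := k) (M := H ⊗[k] H)) f ∘ₗ sg k H H =
      sg k H Y ∘ₗ LinearMap.lTensor H (LinearMap.rTensor H f) := by
  apply TensorProduct.ext
  ext x y z
  simp [sg]

lemma nat2 {Y : Type*} [AddCommMonoid Y] [Module k Y] (f : H →ₗ[k] Y) :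
    LinearMap.rTensor H (LinearMap.lTensor H f) ∘ₗ
        (TensorProduct.assoc k H H H).symm.toLinearMap =
      (TensorProduct.assoc k H Y H).symm.toLinearMap ∘ₗ
        LinearMap.lTensor H (LinearMap.rTensor H f) := by
  apply TensorProduct.ext
  ext x y z
  simp

lemma nat3 {X' Y' : Type*} [AddCommMonoid X'] [Module k X'] [AddCommMonoid Y'] [Module k Y']
    (f : H →ₗ[k] X') (g : H →ₗ[k] Y') :
    TensorProduct.map (TensorProduct.map f g) LinearMap.id ∘ₗ sg k H H =
      ((TensorProduct.assoc k X' Y' H).symm.toLinearMap ∘ₗ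
          LinearMap.lTensor X' (TensorProduct.comm k H Y').toLinearMap) ∘ₗ
        TensorProduct.map f (LinearMap.lTensor H g) := by
  apply TensorProduct.ext
  ext x y z
  simp [sg]

lemma nat4 {Z : Type*} [AddCommMonoid Z] [Module k Z] (g : H →ₗ[k] Z) :
    LinearMap.lTensor (H ⊗[k] H) g ∘ₗ (TensorProduct.assoc k H H H).symm.toLinearMap =
      (TensorProduct.assoc k H H Z).symm.toLinearMap ∘ₗ
        LinearMap.lTensor H (LinearMap.lTensor H g) := by
  apply TensorProduct.ext
  ext x y z
  simp

lemma co1_apply (h : H) :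
    LinearMap.rTensor H (Coalgebra.comul (R := k)) (Coalgebra.comul (R := k) h) =
      (TensorProduct.assoc k H H H).symm (D2 k H h) :=
  LinearMap.congr_fun (co1 (k := k) (H := H)) h

lemma E2_apply (h : H) :
    LinearMap.rTensor H (D2 k H) (Coalgebra.comul (R := k) h) =
      (TensorProduct.assoc k H (H ⊗[k] H) H).symm
        (LinearMap.lTensor H ((TensorProduct.assoc k H H H).symm.toLinearMap) (D3 k H h)) := by
  have h1 : LinearMap.rTensor H (D2 k H) (Coalgebra.comul (R := k) h) =
      LinearMap.rTensor H (LinearMap.lTensor H (Coalgebra.comul (R := k)))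
        (LinearMap.rTensor H (Coalgebra.comul (R := k)) (Coalgebra.comul (R := k) h)) := by
    rw [← LinearMap.rTensor_comp_apply]; rfl
  rw [h1, co1_apply]
  rw [show LinearMap.rTensor H (LinearMap.lTensor H (Coalgebra.comul (R := k) (A := H)))
        ((TensorProduct.assoc k H H H).symm (D2 k H h)) =
      (TensorProduct.assoc k H (H ⊗[k] H) H).symm
        (LinearMap.lTensor H (LinearMap.rTensor H (Coalgebra.comul (R := k))) (D2 k H h)) from
    LinearMap.congr_fun (nat2 (Coalgebra.comul (R := k))) (D2 k H h)]
  congr 1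
  have h2 : LinearMap.lTensor H (LinearMap.rTensor H (Coalgebra.comul (R := k))) (D2 k H h) =
      LinearMap.lTensor H (LinearMap.rTensor H (Coalgebra.comul (R := k)) ∘ₗ
        Coalgebra.comul (R := k)) (Coalgebra.comul (R := k) h) := by
    rw [LinearMap.lTensor_comp, LinearMap.comp_apply]; rfl
  rw [h2, co1, LinearMap.lTensor_comp, D3]
  rfl

lemma KLHS_apply (h : H) :
    TensorProduct.map LinearMap.id (Phi k H) (Phi k H h) =
      (sg k H ((H ⊗[k] H) ⊗[k] H) ∘ₗ
        LinearMap.lTensor H (LinearMap.rTensor H (sg k H H)) ∘ₗ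
        LinearMap.lTensor H ((TensorProduct.assoc k H (H ⊗[k] H) H).symm.toLinearMap) ∘ₗ
        LinearMap.lTensor H (LinearMap.lTensor H ((TensorProduct.assoc k H H H).symm.toLinearMap)))
        (D4 k H h) := by
  rw [show Phi k H h = sg k H H (D2 k H h) from LinearMap.congr_fun (Phi_eq (k := k) (H := H)) h]
  have hn1 := LinearMap.congr_fun (nat1 (k := k) (H := H) (Phi k H)) (D2 k H h)
  simp only [LinearMap.comp_apply] at hn1
  rw [hn1]
  have h1 : LinearMap.lTensor H (LinearMap.rTensor H (Phi k H)) (D2 k H h) =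
      LinearMap.lTensor H (LinearMap.rTensor H (Phi k H) ∘ₗ Coalgebra.comul (R := k))
        (Coalgebra.comul (R := k) h) := by
    rw [LinearMap.lTensor_comp, LinearMap.comp_apply]; rfl
  have h2 : LinearMap.rTensor H (Phi k H) ∘ₗ Coalgebra.comul (R := k) =
      LinearMap.rTensor H (sg k H H) ∘ₗ
        (LinearMap.rTensor H (D2 k H) ∘ₗ Coalgebra.comul (R := k)) := by
    rw [Phi_eq, LinearMap.rTensor_comp, LinearMap.comp_assoc]
  have h3 : ∀ t, (LinearMap.rTensor H (D2 k H) ∘ₗ Coalgebra.comul (R := k)) t =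
      ((TensorProduct.assoc k H (H ⊗[k] H) H).symm.toLinearMap ∘ₗ
        LinearMap.lTensor H ((TensorProduct.assoc k H H H).symm.toLinearMap) ∘ₗ D3 k H) t := by
    intro t
    simpa using E2_apply (k := k) (H := H) t
  have h4 : LinearMap.rTensor H (Phi k H) ∘ₗ Coalgebra.comul (R := k) =
      LinearMap.rTensor H (sg k H H) ∘ₗ
        (TensorProduct.assoc k H (H ⊗[k] H) H).symm.toLinearMap ∘ₗ
        LinearMap.lTensor H ((TensorProduct.assoc k H H H).symm.toLinearMap) ∘ₗ D3 k H := by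
    rw [h2]; congr 1; exact LinearMap.ext h3
  rw [h1, h4]
  simp only [LinearMap.lTensor_comp, LinearMap.comp_apply]
  rfl

lemma E4_apply (h : H) :
    LinearMap.rTensor (H ⊗[k] (H ⊗[k] H)) (Coalgebra.comul (R := k)) (D3 k H h) =
      (TensorProduct.assoc k H H (H ⊗[k] (H ⊗[k] H))).symm (D4 k H h) := by
  have h1 : LinearMap.rTensor (H ⊗[k] (H ⊗[k] H)) (Coalgebra.comul (R := k)) (D3 k H h) =
      LinearMap.lTensor (H ⊗[k] H) (D2 k H)
        (LinearMap.rTensor H (Coalgebra.comul (R := k)) (Coalgebra.comul (R := k) h)) := by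
    rw [show D3 k H h = LinearMap.lTensor H (D2 k H) (Coalgebra.comul (R := k) h) from rfl,
      swap_fg]
  rw [h1, co1_apply]
  have h2 := LinearMap.congr_fun (nat4 (k := k) (H := H) (D2 k H)) (D2 k H h)
  simp only [LinearMap.comp_apply, LinearEquiv.coe_coe] at h2
  rw [h2]
  congr 1
  rw [show D2 k H h = LinearMap.lTensor H (Coalgebra.comul (R := k))
      (Coalgebra.comul (R := k) h) from rfl]
  rw [← LinearMap.lTensor_comp_apply]
  rfl

lemma KRHS_apply (h : H) :
    (TensorProduct.assoc k (H ⊗[k] H) (H ⊗[k] H) H)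
        (TensorProduct.map (Wmap k H) LinearMap.id (Phi k H h)) =
      ((TensorProduct.assoc k (H ⊗[k] H) (H ⊗[k] H) H).toLinearMap ∘ₗ
        TensorProduct.map (TensorProduct.tensorTensorTensorComm k H H H H).toLinearMap
          LinearMap.id ∘ₗ
        (TensorProduct.assoc k (H ⊗[k] H) (H ⊗[k] H) H).symm.toLinearMap ∘ₗ
        LinearMap.lTensor (H ⊗[k] H) (TensorProduct.comm k H (H ⊗[k] H)).toLinearMap ∘ₗ
        LinearMap.lTensor (H ⊗[k] H)
          (LinearMap.lTensor H (TensorProduct.comm k H H).toLinearMap) ∘ₗ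
        (TensorProduct.assoc k H H (H ⊗[k] (H ⊗[k] H))).symm.toLinearMap)
        (D4 k H h) := by
  rw [show Phi k H h = sg k H H (D2 k H h) from LinearMap.congr_fun (Phi_eq (k := k) (H := H)) h]
  -- split W
  have hW : TensorProduct.map (Wmap k H) (LinearMap.id (R := k) (M := H)) =
      TensorProduct.map (TensorProduct.tensorTensorTensorComm k H H H H).toLinearMap
          LinearMap.id ∘ₗ
        TensorProduct.map (TensorProduct.map (Coalgebra.comul (R := k))
          ((TensorProduct.comm k H H).toLinearMap ∘ₗ Coalgebra.comul (R := k)))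
          LinearMap.id := by
    rw [← TensorProduct.map_comp]; rfl
  rw [hW]
  simp only [LinearMap.comp_apply, LinearEquiv.coe_coe]
  congr 1
  congr 1
  -- nat3 step
  have h3 := LinearMap.congr_fun (nat3 (k := k) (H := H) (Coalgebra.comul (R := k))
    ((TensorProduct.comm k H H).toLinearMap ∘ₗ Coalgebra.comul (R := k))) (D2 k H h)
  simp only [LinearMap.comp_apply, LinearEquiv.coe_coe] at h3
  rw [h3]
  congr 1
  congr 1
  -- now: map Δ (lTensor H (cm ∘ Δ)) (D2 h) = lTensor (lTensor cm) ∘ assoc⁻¹-free chain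
  have h4 : LinearMap.rTensor (H ⊗[k] (H ⊗[k] H)) (Coalgebra.comul (R := k))
        (LinearMap.lTensor H
          (LinearMap.lTensor H ((TensorProduct.comm k H H).toLinearMap ∘ₗ
            Coalgebra.comul (R := k))) (D2 k H h)) =
      TensorProduct.map (Coalgebra.comul (R := k))
      (LinearMap.lTensor H ((TensorProduct.comm k H H).toLinearMap ∘ₗ Coalgebra.comul (R := k)))
        (D2 k H h) := by
    rw [← LinearMap.comp_apply, LinearMap.rTensor_comp_lTensor]
  rw [← h4]
  have h5 : LinearMap.lTensor H
      (LinearMap.lTensor H ((TensorProduct.comm k H H).toLinearMap ∘ₗ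
        Coalgebra.comul (R := k))) (D2 k H h) =
      LinearMap.lTensor H (LinearMap.lTensor H (TensorProduct.comm k H H).toLinearMap)
        (D3 k H h) := by
    have hsplit : LinearMap.lTensor H ((TensorProduct.comm k H H).toLinearMap ∘ₗ
        Coalgebra.comul (R := k) (A := H)) =
        LinearMap.lTensor H (TensorProduct.comm k H H).toLinearMap ∘ₗ
          LinearMap.lTensor H (Coalgebra.comul (R := k)) :=
      LinearMap.lTensor_comp H _ _
    rw [hsplit, LinearMap.lTensor_comp, LinearMap.comp_apply]
    congr 1
    rw [show D2 k H h = LinearMap.lTensor H (Coalgebra.comul (R := k))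
        (Coalgebra.comul (R := k) h) from rfl, ← LinearMap.lTensor_comp_apply]
    rfl
  rw [h5]
  have h6 : LinearMap.rTensor (H ⊗[k] (H ⊗[k] H)) (Coalgebra.comul (R := k))
      (LinearMap.lTensor H (LinearMap.lTensor H (TensorProduct.comm k H H).toLinearMap)
        (D3 k H h)) =
      LinearMap.lTensor (H ⊗[k] H)
        (LinearMap.lTensor H (TensorProduct.comm k H H).toLinearMap)
        (LinearMap.rTensor (H ⊗[k] (H ⊗[k] H)) (Coalgebra.comul (R := k)) (D3 k H h)) :=
    swap_fg _ _ _
  rw [h6, E4_apply]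

set_option maxHeartbeats 1000000 in
lemma Kstruct :
    (sg k H ((H ⊗[k] H) ⊗[k] H) ∘ₗ
        LinearMap.lTensor H (LinearMap.rTensor H (sg k H H)) ∘ₗ
        LinearMap.lTensor H ((TensorProduct.assoc k H (H ⊗[k] H) H).symm.toLinearMap) ∘ₗ
        LinearMap.lTensor H (LinearMap.lTensor H ((TensorProduct.assoc k H H H).symm.toLinearMap)))
      =
      ((TensorProduct.assoc k (H ⊗[k] H) (H ⊗[k] H) H).toLinearMap ∘ₗ
        TensorProduct.map (TensorProduct.tensorTensorTensorComm k H H H H).toLinearMap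
          LinearMap.id ∘ₗ
        (TensorProduct.assoc k (H ⊗[k] H) (H ⊗[k] H) H).symm.toLinearMap ∘ₗ
        LinearMap.lTensor (H ⊗[k] H) (TensorProduct.comm k H (H ⊗[k] H)).toLinearMap ∘ₗ
        LinearMap.lTensor (H ⊗[k] H)
          (LinearMap.lTensor H (TensorProduct.comm k H H).toLinearMap) ∘ₗ
        (TensorProduct.assoc k H H (H ⊗[k] (H ⊗[k] H))).symm.toLinearMap) := by
  apply TensorProduct.ext
  ext x1 x2 x3 x4 x5
  simp [sg]

lemma K_apply (h : H) :
    TensorProduct.map LinearMap.id (Phi k H) (Phi k H h) =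
      (TensorProduct.assoc k (H ⊗[k] H) (H ⊗[k] H) H)
        (TensorProduct.map (Wmap k H) LinearMap.id (Phi k H h)) := by
  rw [KLHS_apply, KRHS_apply, Kstruct]

end Coalg

section Act

variable {k : Type*} [Field k] {H : Type*} [Ring H] [Bialgebra k H]
  {C : Type*} [Ring C] [Algebra k C]
variable (act actT : H →ₗ[k] Module.End k C)

lemma sandwich_tmul (a b : H) (c : C) :
    sandwich act actT (a ⊗ₜ[k] b) c = act a (actT b c) := by
  simp [sandwich, LinearMap.mul'_apply]

lemma sandwich_tmul' (a b : H) :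
    sandwich act actT (a ⊗ₜ[k] b) = act a ∘ₗ actT b := by
  ext c; rw [sandwich_tmul]; rfl

/-- the multiplication on `C ⊗ H` -/
def multMap : (C ⊗[k] H) →ₗ[k] (C ⊗[k] H) →ₗ[k] (C ⊗[k] H) :=
  TensorProduct.lift <|
    ((LinearMap.llcomp k (C ⊗[k] H) (C ⊗[k] H) (C ⊗[k] H)) ∘ₗ
      (LinearMap.rTensorHom H) ∘ₗ (LinearMap.mul k C)).compl₂
      ((TensorProduct.homTensorHomMap (RingHom.id k) C H C H) ∘ₗ
        (LinearMap.lTensor (Module.End k C) (LinearMap.mul k H)) ∘ₗ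
        (TensorProduct.map (sandwich act actT) LinearMap.id) ∘ₗ (Phi k H))

lemma multMap_tmul_left (c : C) (h : H) (y : C ⊗[k] H) :
    multMap act actT (c ⊗ₜ[k] h) y =
      LinearMap.rTensor H (LinearMap.mulLeft k c)
        ((TensorProduct.homTensorHomMap (RingHom.id k) C H C H)
          (TensorProduct.map (sandwich act actT) (LinearMap.mul k H) (Phi k H h)) y) := by
  simp only [multMap, TensorProduct.lift.tmul, LinearMap.compl₂_apply, LinearMap.comp_apply,
    LinearMap.llcomp_apply]
  rw [show (LinearMap.mul k C) c = LinearMap.mulLeft k c from by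
    ext x; simp [LinearMap.mul_apply']]
  rw [show (LinearMap.lTensor (Module.End k C) (LinearMap.mul k H))
        ((TensorProduct.map (sandwich act actT) LinearMap.id) ((Phi k H) h)) =
      TensorProduct.map (sandwich act actT) (LinearMap.mul k H) ((Phi k H) h) from by
    rw [← LinearMap.comp_apply, LinearMap.lTensor_comp_map]; simp]
  rfl

/-- workhorse formula -/
lemma multMap_tmul (c c' : C) (h h' : H) :
    multMap act actT (c ⊗ₜ[k] h) (c' ⊗ₜ[k] h') =
      TensorProduct.map
        ((LinearMap.mulLeft k c) ∘ₗ (LinearMap.applyₗ c') ∘ₗ (sandwich act actT))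
        (LinearMap.mulRight k h') (Phi k H h) := by
  rw [multMap_tmul_left]
  generalize Phi k H h = t
  induction t with
  | zero => simp
  | tmul a g => simp [TensorProduct.homTensorHomMap_apply]
  | add u v hu hv => simp only [map_add, LinearMap.add_apply, hu, hv]

/-- the specification format from the theorem statement -/
lemma multMap_spec (c c' : C) (h h' : H) :
    multMap act actT (c ⊗ₜ[k] h) (c' ⊗ₜ[k] h') =
      TensorProduct.map ((LinearMap.mulLeft k c) ∘ₗ (LinearMap.applyₗ c'))
        (LinearMap.mulRight k h')
        (TensorProduct.map (sandwich act actT) LinearMap.id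
          (rearr k H ((LinearMap.rTensor H (Coalgebra.comul (R := k)))
            (Coalgebra.comul (R := k) h)))) := by
  rw [multMap_tmul]
  rw [show rearr k H ((LinearMap.rTensor H (Coalgebra.comul (R := k)))
      (Coalgebra.comul (R := k) h)) = Phi k H h from rfl]
  symm
  rw [← LinearMap.comp_apply, ← TensorProduct.map_comp]
  rfl

/- ### counit contraction -/

variable (k H) in
/-- `(x ⊗ b) ⊗ g ↦ (x ⊗ g) ⊗ b` on `(k ⊗ H) ⊗ H` -/
def sigmaK : ((k ⊗[k] H) ⊗[k] H) →ₗ[k] ((k ⊗[k] H) ⊗[k] H) :=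
  (TensorProduct.assoc k k H H).symm.toLinearMap ∘ₗ
    LinearMap.lTensor k (TensorProduct.comm k H H).toLinearMap ∘ₗ
    (TensorProduct.assoc k k H H).toLinearMap

variable (k H) in
def qTwo : ((k ⊗[k] H) ⊗[k] H) →ₗ[k] (k ⊗[k] H) :=
  TensorProduct.map
    (LinearMap.mul' k k ∘ₗ LinearMap.lTensor k (Coalgebra.counit (R := k) (A := H)))
    LinearMap.id ∘ₗ sigmaK k H

lemma EQ1 :
    (TensorProduct.map ((LinearMap.mul' k k) ∘ₗ
        TensorProduct.map (Coalgebra.counit (R := k) (A := H)) (Coalgebra.counit (R := k)))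
        (LinearMap.id (R := k) (M := H))) ∘ₗ rearr k H =
      qTwo k H ∘ₗ LinearMap.rTensor H
        (LinearMap.rTensor H (Coalgebra.counit (R := k) (A := H))) := by
  apply TensorProduct.ext
  ext a b g
  simp [rearr, qTwo, sigmaK, LinearMap.mul'_apply, mul_comm]

lemma EQ2 :
    qTwo k H ∘ₗ LinearMap.rTensor H (TensorProduct.mk k k H 1) =
      (TensorProduct.comm k H k).toLinearMap ∘ₗ
        LinearMap.lTensor H (Coalgebra.counit (R := k) (A := H)) := by
  apply TensorProduct.ext
  ext a b
  simp [qTwo, sigmaK, LinearMap.mul'_apply]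

lemma counit_contract (h : H) :
    TensorProduct.map
        ((LinearMap.mul' k k) ∘ₗ
          TensorProduct.map (Coalgebra.counit (R := k) (A := H)) (Coalgebra.counit (R := k)))
        (LinearMap.id (R := k) (M := H)) (Phi k H h) = (1 : k) ⊗ₜ[k] h := by
  have e1 : TensorProduct.map
      ((LinearMap.mul' k k) ∘ₗ
        TensorProduct.map (Coalgebra.counit (R := k) (A := H)) (Coalgebra.counit (R := k)))
      (LinearMap.id (R := k) (M := H)) (Phi k H h) =
      qTwo k H (LinearMap.rTensor H (LinearMap.rTensor H (Coalgebra.counit (R := k)))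
        (LinearMap.rTensor H (Coalgebra.comul (R := k)) (Coalgebra.comul (R := k) h))) := by
    rw [show Phi k H h = rearr k H ((LinearMap.rTensor H (Coalgebra.comul (R := k)))
      (Coalgebra.comul (R := k) h)) from rfl]
    rw [← LinearMap.comp_apply, EQ1, LinearMap.comp_apply]
  rw [e1, ← LinearMap.rTensor_comp_apply]
  rw [show (LinearMap.rTensor H (Coalgebra.counit (R := k) (A := H))) ∘ₗ
      (Coalgebra.comul (R := k)) = TensorProduct.mk k k H 1 from
    Coalgebra.rTensor_counit_comp_comul]
  rw [← LinearMap.comp_apply, EQ2, LinearMap.comp_apply]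
  rw [show LinearMap.lTensor H (Coalgebra.counit (R := k) (A := H))
      (Coalgebra.comul (R := k) h) = h ⊗ₜ[k] (1 : k) from Coalgebra.lTensor_counit_comul h]
  rfl

/- ### unit laws -/

lemma apply_one_sandwich
    (hact_unit : ∀ h : H, act h 1 = (Coalgebra.counit (R := k) h) • (1 : C))
    (hactT_unit : ∀ h : H, actT h 1 = (Coalgebra.counit (R := k) h) • (1 : C)) :
    (LinearMap.applyₗ (1 : C)) ∘ₗ sandwich act actT =
      (Algebra.linearMap k C) ∘ₗ (LinearMap.mul' k k) ∘ₗ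
        TensorProduct.map (Coalgebra.counit (R := k) (A := H)) (Coalgebra.counit (R := k) (A := H)) := by
  apply TensorProduct.ext
  ext a b
  simp only [LinearMap.comp_apply, LinearMap.applyₗ_apply_apply, TensorProduct.map_tmul,
    LinearMap.mul'_apply, Algebra.linearMap_apply, sandwich_tmul, LinearMap.compr₂_apply,
    LinearMap.compr₂ₛₗ_apply, TensorProduct.mk_apply]
  rw [hactT_unit, map_smul, hact_unit, smul_smul, mul_comm, Algebra.algebraMap_eq_smul_one]

lemma mult_one_right
    (hact_unit : ∀ h : H, act h 1 = (Coalgebra.counit (R := k) h) • (1 : C))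
    (hactT_unit : ∀ h : H, actT h 1 = (Coalgebra.counit (R := k) h) • (1 : C))
    (c : C) (h : H) :
    multMap act actT (c ⊗ₜ[k] h) ((1 : C) ⊗ₜ[k] (1 : H)) = c ⊗ₜ[k] h := by
  rw [multMap_tmul, LinearMap.mulRight_one]
  have e : (LinearMap.mulLeft k c) ∘ₗ (LinearMap.applyₗ (1 : C)) ∘ₗ (sandwich act actT) =
      ((LinearMap.mulLeft k c) ∘ₗ (Algebra.linearMap k C)) ∘ₗ ((LinearMap.mul' k k) ∘ₗ
        TensorProduct.map (Coalgebra.counit (R := k) (A := H)) (Coalgebra.counit (R := k) (A := H))) := by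
    rw [apply_one_sandwich act actT hact_unit hactT_unit, ← LinearMap.comp_assoc]
  rw [e]
  have split : TensorProduct.map
      (((LinearMap.mulLeft k c) ∘ₗ (Algebra.linearMap k C)) ∘ₗ ((LinearMap.mul' k k) ∘ₗ
        TensorProduct.map (Coalgebra.counit (R := k) (A := H)) (Coalgebra.counit (R := k) (A := H))))
      (LinearMap.id (R := k) (M := H)) =
      TensorProduct.map ((LinearMap.mulLeft k c) ∘ₗ (Algebra.linearMap k C)) LinearMap.id ∘ₗ
        TensorProduct.map ((LinearMap.mul' k k) ∘ₗ
          TensorProduct.map (Coalgebra.counit (R := k) (A := H)) (Coalgebra.counit (R := k) (A := H)))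
          LinearMap.id := by
    apply TensorProduct.ext
    ext a b g
    simp
  rw [split, LinearMap.comp_apply, counit_contract]
  simp

lemma mult_one_left_pure
    (hact_one : act 1 = LinearMap.id) (hactT_one : actT 1 = LinearMap.id)
    (c' : C) (h' : H) :
    multMap act actT ((1 : C) ⊗ₜ[k] (1 : H)) (c' ⊗ₜ[k] h') = c' ⊗ₜ[k] h' := by
  rw [multMap_tmul, Phi_one]
  simp [sandwich_tmul, hact_one, hactT_one]

lemma mult_one_left
    (hact_one : act 1 = LinearMap.id) (hactT_one : actT 1 = LinearMap.id)
    (x : C ⊗[k] H) :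
    multMap act actT ((1 : C) ⊗ₜ[k] (1 : H)) x = x := by
  induction x with
  | zero => simp
  | tmul c' h' => exact mult_one_left_pure act actT hact_one hactT_one c' h'
  | add u v hu hv => rw [map_add, hu, hv]

lemma mult_one_right'
    (hact_unit : ∀ h : H, act h 1 = (Coalgebra.counit (R := k) h) • (1 : C))
    (hactT_unit : ∀ h : H, actT h 1 = (Coalgebra.counit (R := k) h) • (1 : C))
    (x : C ⊗[k] H) :
    multMap act actT x ((1 : C) ⊗ₜ[k] (1 : H)) = x := by
  induction x with
  | zero => simp
  | tmul c h => exact mult_one_right act actT hact_unit hactT_unit c h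
  | add u v hu hv => rw [map_add, LinearMap.add_apply, hu, hv]

lemma mult_cc
    (hact_one : act 1 = LinearMap.id) (hactT_one : actT 1 = LinearMap.id)
    (c c' : C) :
    multMap act actT (c ⊗ₜ[k] (1 : H)) (c' ⊗ₜ[k] (1 : H)) = (c * c') ⊗ₜ[k] (1 : H) := by
  rw [multMap_tmul, Phi_one]
  simp [sandwich_tmul, hact_one, hactT_one]

lemma mult_hh
    (hact_unit : ∀ h : H, act h 1 = (Coalgebra.counit (R := k) h) • (1 : C))
    (hactT_unit : ∀ h : H, actT h 1 = (Coalgebra.counit (R := k) h) • (1 : C))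
    (h h' : H) :
    multMap act actT ((1 : C) ⊗ₜ[k] h) ((1 : C) ⊗ₜ[k] h') = (1 : C) ⊗ₜ[k] (h * h') := by
  rw [multMap_tmul, LinearMap.mulLeft_one, LinearMap.id_comp,
    apply_one_sandwich act actT hact_unit hactT_unit]
  have split : TensorProduct.map
      ((Algebra.linearMap k C) ∘ₗ ((LinearMap.mul' k k) ∘ₗ
        TensorProduct.map (Coalgebra.counit (R := k) (A := H)) (Coalgebra.counit (R := k) (A := H))))
      (LinearMap.mulRight k h') =
      TensorProduct.map (Algebra.linearMap k C) (LinearMap.mulRight k h') ∘ₗ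
        TensorProduct.map ((LinearMap.mul' k k) ∘ₗ
          TensorProduct.map (Coalgebra.counit (R := k) (A := H)) (Coalgebra.counit (R := k) (A := H)))
          LinearMap.id := by
    apply TensorProduct.ext
    ext a b g
    simp
  rw [split, LinearMap.comp_apply, counit_contract]
  simp

lemma mult_ch
    (hact_one : act 1 = LinearMap.id) (hactT_one : actT 1 = LinearMap.id)
    (c : C) (h : H) :
    multMap act actT (c ⊗ₜ[k] (1 : H)) ((1 : C) ⊗ₜ[k] h) = c ⊗ₜ[k] h := by
  rw [multMap_tmul, Phi_one]
  simp [sandwich_tmul, hact_one, hactT_one]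

/- ### injectivity -/

lemma inj_C : Function.Injective (fun c : C => (c ⊗ₜ[k] (1 : H) : C ⊗[k] H)) := by
  have retr : ∀ c : C, (TensorProduct.rid k C)
      (LinearMap.lTensor C (Coalgebra.counit (R := k) (A := H)) (c ⊗ₜ[k] (1 : H))) = c := by
    intro c
    simp [Bialgebra.counit_one]
  intro a b hab
  have := congrArg (fun z => (TensorProduct.rid k C)
    (LinearMap.lTensor C (Coalgebra.counit (R := k) (A := H)) z)) hab
  simpa [retr] using this

lemma inj_H [Nontrivial C] :
    Function.Injective (fun h : H => ((1 : C) ⊗ₜ[k] h : C ⊗[k] H)) := by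
  obtain ⟨g, hg⟩ := LinearMap.exists_leftInverse_of_injective (Algebra.linearMap k C)
    (by
      rw [LinearMap.ker_eq_bot]
      intro a b hab
      exact (algebraMap k C).injective hab)
  have hg1 : g (1 : C) = 1 := by
    have := LinearMap.congr_fun hg (1 : k)
    simpa using this
  have retr : ∀ h : H, (TensorProduct.lid k H)
      (LinearMap.rTensor H g ((1 : C) ⊗ₜ[k] h)) = h := by
    intro h
    simp [hg1]
  intro a b hab
  have := congrArg (fun z => (TensorProduct.lid k H) (LinearMap.rTensor H g z)) hab
  simpa [hg1] using this

/- ### the measuring property of `sandwich` -/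

lemma act_mul'
    (hact_alg : ∀ (h : H) (c c' : C), act h (c * c') =
      LinearMap.mul' k C ((pairEndo act act) (Coalgebra.comul (R := k) h) (c ⊗ₜ[k] c')))
    (a : H) :
    (act a) ∘ₗ LinearMap.mul' k C =
      LinearMap.mul' k C ∘ₗ pairEndo act act (Coalgebra.comul (R := k) a) := by
  apply TensorProduct.ext
  ext x y
  simpa using hact_alg a x y

lemma actT_mul'
    (hactT_alg : ∀ (h : H) (c c' : C), actT h (c * c') =
      LinearMap.mul' k C ((pairEndo actT actT)
        ((TensorProduct.comm k H H) (Coalgebra.comul (R := k) h)) (c ⊗ₜ[k] c')))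
    (b : H) :
    (actT b) ∘ₗ LinearMap.mul' k C =
      LinearMap.mul' k C ∘ₗ pairEndo actT actT
        ((TensorProduct.comm k H H) (Coalgebra.comul (R := k) b)) := by
  apply TensorProduct.ext
  ext x y
  simpa using hactT_alg b x y

lemma pair_comp (t₁ t₂ : H ⊗[k] H) :
    (pairEndo act act t₁) ∘ₗ (pairEndo actT actT t₂) =
      pairEndo (sandwich act actT) (sandwich act actT)
        ((TensorProduct.tensorTensorTensorComm k H H H H) (t₁ ⊗ₜ[k] t₂)) := by
  induction t₁ with
  | zero => simp
  | add u v hu hv => simp only [map_add, LinearMap.add_comp, add_tmul, hu, hv]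
  | tmul a₁ a₂ =>
    induction t₂ with
    | zero => simp
    | add u v hu hv => simp only [map_add, LinearMap.comp_add, tmul_add, hu, hv]
    | tmul b₁ b₂ =>
      simp only [pairEndo, LinearMap.comp_apply, TensorProduct.map_tmul,
        TensorProduct.homTensorHomMap_apply, TensorProduct.tensorTensorTensorComm_tmul,
        sandwich_tmul']
      rw [← TensorProduct.map_comp]

lemma sandwich_mul
    (hact_alg : ∀ (h : H) (c c' : C), act h (c * c') =
      LinearMap.mul' k C ((pairEndo act act) (Coalgebra.comul (R := k) h) (c ⊗ₜ[k] c')))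
    (hactT_alg : ∀ (h : H) (c c' : C), actT h (c * c') =
      LinearMap.mul' k C ((pairEndo actT actT)
        ((TensorProduct.comm k H H) (Coalgebra.comul (R := k) h)) (c ⊗ₜ[k] c')))
    (a b : H) :
    (sandwich act actT (a ⊗ₜ[k] b)) ∘ₗ LinearMap.mul' k C =
      LinearMap.mul' k C ∘ₗ pairEndo (sandwich act actT) (sandwich act actT)
        (Wmap k H (a ⊗ₜ[k] b)) := by
  have hW : Wmap k H (a ⊗ₜ[k] b) = (TensorProduct.tensorTensorTensorComm k H H H H)
      ((Coalgebra.comul (R := k) a) ⊗ₜ[k]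
        ((TensorProduct.comm k H H) (Coalgebra.comul (R := k) b))) := by
    simp [Wmap]
  rw [hW, sandwich_tmul', LinearMap.comp_assoc, actT_mul' actT hactT_alg b,
    ← LinearMap.comp_assoc, act_mul' act hact_alg a, LinearMap.comp_assoc,
    pair_comp]

lemma sandwich_mul_apply
    (hact_alg : ∀ (h : H) (c c' : C), act h (c * c') =
      LinearMap.mul' k C ((pairEndo act act) (Coalgebra.comul (R := k) h) (c ⊗ₜ[k] c')))
    (hactT_alg : ∀ (h : H) (c c' : C), actT h (c * c') =
      LinearMap.mul' k C ((pairEndo actT actT)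
        ((TensorProduct.comm k H H) (Coalgebra.comul (R := k) h)) (c ⊗ₜ[k] c')))
    (t : H ⊗[k] H) (x y : C) :
    sandwich act actT t (x * y) =
      LinearMap.mul' k C (pairEndo (sandwich act actT) (sandwich act actT)
        (Wmap k H t) (x ⊗ₜ[k] y)) := by
  induction t with
  | zero => simp
  | add u v hu hv => simp only [map_add, LinearMap.add_apply, hu, hv]
  | tmul a b =>
    have := LinearMap.congr_fun (sandwich_mul act actT hact_alg hactT_alg a b) (x ⊗ₜ[k] y)
    simpa using this

/- ### the two sides of associativity as linear maps -/

variable (c c' c'' : C) (h'' : H)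

def Tlin (c'' : C) (h'' : H) :
    C →ₗ[k] (((H ⊗[k] H) ⊗[k] H) →ₗ[k] C ⊗[k] H) :=
  ((LinearMap.llcomp k ((H ⊗[k] H) ⊗[k] H) (C ⊗[k] H) (C ⊗[k] H)).flip
    (TensorProduct.map ((LinearMap.applyₗ c'') ∘ₗ sandwich act actT)
      (LinearMap.mulRight k h''))) ∘ₗ
  (LinearMap.rTensorHom H) ∘ₗ (LinearMap.mul k C)

lemma Tlin_apply (c₀ : C) (t : (H ⊗[k] H) ⊗[k] H) :
    Tlin act actT c'' h'' c₀ t =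
      TensorProduct.map
        (LinearMap.mulLeft k c₀ ∘ₗ LinearMap.applyₗ c'' ∘ₗ sandwich act actT)
        (LinearMap.mulRight k h'') t := by
  induction t with
  | zero => simp
  | add u v hu hv => simp only [map_add, hu, hv]
  | tmul u z =>
    simp [Tlin, LinearMap.mul_apply', LinearMap.llcomp_apply, LinearMap.flip_apply]

def Lf : ((H ⊗[k] H) ⊗[k] ((H ⊗[k] H) ⊗[k] H)) ⊗[k] ((H ⊗[k] H) ⊗[k] H) →ₗ[k] C ⊗[k] H :=
  TensorProduct.lift (TensorProduct.lift (
    (((LinearMap.lcomp k (((H ⊗[k] H) ⊗[k] H) →ₗ[k] C ⊗[k] H)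
        (LinearMap.mul k ((H ⊗[k] H) ⊗[k] H))) ∘ₗ
      (LinearMap.llcomp k ((H ⊗[k] H) ⊗[k] H) ((H ⊗[k] H) ⊗[k] H) (C ⊗[k] H)) ∘ₗ
      (Tlin act actT c'' h'')) ∘ₗ
    (LinearMap.mulLeft k c ∘ₗ LinearMap.applyₗ c' ∘ₗ sandwich act actT))))

lemma Lf_apply (a : H ⊗[k] H) (u v : (H ⊗[k] H) ⊗[k] H) :
    Lf act actT c c' c'' h'' ((a ⊗ₜ[k] u) ⊗ₜ[k] v) =
      Tlin act actT c'' h'' (c * (sandwich act actT a c')) (u * v) := by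
  simp [Lf, LinearMap.mul_apply']

def qMap : (H ⊗[k] H) ⊗[k] (H ⊗[k] H) →ₗ[k] Module.End k C :=
  TensorProduct.lift (((LinearMap.llcomp k C C C) ∘ₗ (LinearMap.mul k C) ∘ₗ
    (LinearMap.mulLeft k c ∘ₗ LinearMap.applyₗ c' ∘ₗ sandwich act actT)).compl₂
    (sandwich act actT))

lemma qMap_tmul (u₁ u₂ : H ⊗[k] H) (e : C) :
    qMap act actT c c' (u₁ ⊗ₜ[k] u₂) e =
      (c * (sandwich act actT u₁ c')) * (sandwich act actT u₂ e) := by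
  simp [qMap, LinearMap.mul_apply']

def Rf : (((H ⊗[k] H) ⊗[k] (H ⊗[k] H)) ⊗[k] H) ⊗[k] ((H ⊗[k] H) ⊗[k] H) →ₗ[k] C ⊗[k] H :=
  TensorProduct.lift (
    (LinearMap.lcomp k (C ⊗[k] H)
      (LinearMap.rTensor H ((LinearMap.applyₗ c'') ∘ₗ sandwich act actT))) ∘ₗ
    (TensorProduct.homTensorHomMap (RingHom.id k) C H C H) ∘ₗ
    TensorProduct.map (qMap act actT c c')
      ((LinearMap.lcomp k H (LinearMap.mulRight k h'')) ∘ₗ LinearMap.mul k H))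

lemma Rf_apply (w : (H ⊗[k] H) ⊗[k] (H ⊗[k] H)) (g : H) (v : (H ⊗[k] H) ⊗[k] H) :
    Rf act actT c c' c'' h'' ((w ⊗ₜ[k] g) ⊗ₜ[k] v) =
      TensorProduct.map (qMap act actT c c' w)
        ((LinearMap.mulLeft k g) ∘ₗ (LinearMap.mulRight k h''))
        (LinearMap.rTensor H ((LinearMap.applyₗ c'') ∘ₗ sandwich act actT) v) := by
  simp only [Rf, TensorProduct.lift.tmul, LinearMap.comp_apply, TensorProduct.map_tmul,
    TensorProduct.homTensorHomMap_apply, LinearMap.lcomp_apply]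
  congr 2

lemma QW
    (hact_alg : ∀ (h : H) (c c' : C), act h (c * c') =
      LinearMap.mul' k C ((pairEndo act act) (Coalgebra.comul (R := k) h) (c ⊗ₜ[k] c')))
    (hactT_alg : ∀ (h : H) (c c' : C), actT h (c * c') =
      LinearMap.mul' k C ((pairEndo actT actT)
        ((TensorProduct.comm k H H) (Coalgebra.comul (R := k) h)) (c ⊗ₜ[k] c')))
    (t : H ⊗[k] H) (e : C) :
    c * (sandwich act actT t (c' * e)) = qMap act actT c c' (Wmap k H t) e := by
  have q_pair : ∀ (w : (H ⊗[k] H) ⊗[k] (H ⊗[k] H)),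
      qMap act actT c c' w e = c * (LinearMap.mul' k C
        (pairEndo (sandwich act actT) (sandwich act actT) w (c' ⊗ₜ[k] e))) := by
    intro w
    induction w with
    | zero => simp
    | add u v hu hv => simp only [map_add, LinearMap.add_apply, hu, hv, mul_add]
    | tmul u₁ u₂ =>
      rw [qMap_tmul]
      simp only [pairEndo, LinearMap.comp_apply, TensorProduct.map_tmul,
        TensorProduct.homTensorHomMap_apply, LinearMap.mul'_apply]
      rw [mul_assoc]
  rw [q_pair (Wmap k H t), sandwich_mul_apply act actT hact_alg hactT_alg]

lemma sandwich_assoc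
    (hact_mulH : ∀ g h : H, act (g * h) = (act g) ∘ₗ (act h))
    (hactT_mulH : ∀ g h : H, actT (g * h) = (actT g) ∘ₗ (actT h))
    (hcomm : ∀ (g h : H) (c : C), act g (actT h c) = actT h (act g c))
    (a b x y : H) (e : C) :
    sandwich act actT ((a * x) ⊗ₜ[k] (b * y)) e =
      sandwich act actT (a ⊗ₜ[k] b) (sandwich act actT (x ⊗ₜ[k] y) e) := by
  simp only [sandwich_tmul, hact_mulH, hactT_mulH, LinearMap.comp_apply]
  rw [hcomm x b]

lemma A1 (h h' : H) :
    multMap act actT (multMap act actT (c ⊗ₜ[k] h) (c' ⊗ₜ[k] h')) (c'' ⊗ₜ[k] h'') =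
      Lf act actT c c' c'' h''
        ((TensorProduct.map LinearMap.id (Phi k H) (Phi k H h)) ⊗ₜ[k] (Phi k H h')) := by
  rw [multMap_tmul act actT c c' h h']
  generalize Phi k H h = t
  induction t with
  | zero => simp
  | add u v hu hv => simp only [map_add, LinearMap.add_apply, add_tmul, hu, hv]
  | tmul a g =>
    rw [TensorProduct.map_tmul, TensorProduct.map_tmul, multMap_tmul, Lf_apply, Tlin_apply]
    rw [show (LinearMap.mulRight k h') g = g * h' from rfl, Phi_mul]
    simp only [LinearMap.comp_apply, LinearMap.mulLeft_apply, LinearMap.applyₗ_apply_apply,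
      LinearMap.id_coe, id_eq]

lemma A2
    (hact_alg : ∀ (h : H) (c c' : C), act h (c * c') =
      LinearMap.mul' k C ((pairEndo act act) (Coalgebra.comul (R := k) h) (c ⊗ₜ[k] c')))
    (hactT_alg : ∀ (h : H) (c c' : C), actT h (c * c') =
      LinearMap.mul' k C ((pairEndo actT actT)
        ((TensorProduct.comm k H H) (Coalgebra.comul (R := k) h)) (c ⊗ₜ[k] c')))
    (h h' : H) :
    multMap act actT (c ⊗ₜ[k] h) (multMap act actT (c' ⊗ₜ[k] h') (c'' ⊗ₜ[k] h'')) =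
      Rf act actT c c' c'' h''
        ((TensorProduct.map (Wmap k H) LinearMap.id (Phi k H h)) ⊗ₜ[k] (Phi k H h')) := by
  rw [multMap_tmul act actT c' c'' h' h'']
  generalize Phi k H h' = t'
  induction t' with
  | zero => simp
  | add u v hu hv => simp only [map_add, tmul_add, hu, hv]
  | tmul v z =>
    rw [TensorProduct.map_tmul, multMap_tmul]
    generalize Phi k H h = t
    induction t with
    | zero => simp
    | add u w hu hw => simp only [map_add, add_tmul, LinearMap.add_apply, hu, hw]
    | tmul a g =>
      rw [TensorProduct.map_tmul, TensorProduct.map_tmul, Rf_apply, LinearMap.rTensor_tmul,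
        TensorProduct.map_tmul]
      simp only [LinearMap.comp_apply, LinearMap.mulLeft_apply, LinearMap.applyₗ_apply_apply,
        LinearMap.mulRight_apply, LinearMap.id_coe, id_eq]
      rw [QW act actT c c' hact_alg hactT_alg a (sandwich act actT v c'')]

lemma A3
    (hact_mulH : ∀ g h : H, act (g * h) = (act g) ∘ₗ (act h))
    (hactT_mulH : ∀ g h : H, actT (g * h) = (actT g) ∘ₗ (actT h))
    (hcomm : ∀ (g h : H) (c : C), act g (actT h c) = actT h (act g c)) :
    Lf act actT c c' c'' h'' ∘ₗ
      LinearMap.rTensor ((H ⊗[k] H) ⊗[k] H)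
        (TensorProduct.assoc k (H ⊗[k] H) (H ⊗[k] H) H).toLinearMap =
      Rf act actT c c' c'' h'' := by
  ext a1 b1 a2 b2 g x y z
  simp only [TensorProduct.AlgebraTensorModule.curry_apply, TensorProduct.curry_apply,
    LinearMap.coe_restrictScalars, LinearMap.comp_apply, LinearMap.rTensor_tmul,
    LinearEquiv.coe_coe, TensorProduct.assoc_tmul, Lf_apply, Rf_apply, Tlin_apply,
    Algebra.TensorProduct.tmul_mul_tmul, TensorProduct.map_tmul, qMap_tmul,
    LinearMap.mulRight_apply, LinearMap.mulLeft_apply, LinearMap.applyₗ_apply_apply]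
  rw [sandwich_assoc act actT hact_mulH hactT_mulH hcomm, mul_assoc g z h'']

lemma mult_assoc_pure
    (hact_mulH : ∀ g h : H, act (g * h) = (act g) ∘ₗ (act h))
    (hactT_mulH : ∀ g h : H, actT (g * h) = (actT g) ∘ₗ (actT h))
    (hact_alg : ∀ (h : H) (c c' : C), act h (c * c') =
      LinearMap.mul' k C ((pairEndo act act) (Coalgebra.comul (R := k) h) (c ⊗ₜ[k] c')))
    (hactT_alg : ∀ (h : H) (c c' : C), actT h (c * c') =
      LinearMap.mul' k C ((pairEndo actT actT)
        ((TensorProduct.comm k H H) (Coalgebra.comul (R := k) h)) (c ⊗ₜ[k] c')))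
    (hcomm : ∀ (g h : H) (c : C), act g (actT h c) = actT h (act g c))
    (h h' : H) :
    multMap act actT (multMap act actT (c ⊗ₜ[k] h) (c' ⊗ₜ[k] h')) (c'' ⊗ₜ[k] h'') =
      multMap act actT (c ⊗ₜ[k] h) (multMap act actT (c' ⊗ₜ[k] h') (c'' ⊗ₜ[k] h'')) := by
  rw [A1, A2 act actT c c' c'' h'' hact_alg hactT_alg h h', K_apply]
  have key := LinearMap.congr_fun
    (A3 act actT c c' c'' h'' hact_mulH hactT_mulH hcomm)
    ((TensorProduct.map (Wmap k H) LinearMap.id (Phi k H h)) ⊗ₜ[k] (Phi k H h'))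
  simp only [LinearMap.comp_apply, LinearMap.rTensor_tmul, LinearEquiv.coe_coe] at key
  rw [key]

lemma mult_assoc
    (hact_mulH : ∀ g h : H, act (g * h) = (act g) ∘ₗ (act h))
    (hactT_mulH : ∀ g h : H, actT (g * h) = (actT g) ∘ₗ (actT h))
    (hact_alg : ∀ (h : H) (c c' : C), act h (c * c') =
      LinearMap.mul' k C ((pairEndo act act) (Coalgebra.comul (R := k) h) (c ⊗ₜ[k] c')))
    (hactT_alg : ∀ (h : H) (c c' : C), actT h (c * c') =
      LinearMap.mul' k C ((pairEndo actT actT)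
        ((TensorProduct.comm k H H) (Coalgebra.comul (R := k) h)) (c ⊗ₜ[k] c')))
    (hcomm : ∀ (g h : H) (c : C), act g (actT h c) = actT h (act g c))
    (x y z : C ⊗[k] H) :
    multMap act actT (multMap act actT x y) z =
      multMap act actT x (multMap act actT y z) := by
  induction x with
  | zero => simp
  | add u v hu hv => simp only [map_add, LinearMap.add_apply, hu, hv]
  | tmul cx hx =>
    induction y with
    | zero => simp
    | add u v hu hv => simp only [map_add, LinearMap.add_apply, hu, hv]
    | tmul cy hy =>
      induction z with
      | zero => simp
      | add u v hu hv => simp only [map_add, LinearMap.add_apply, hu, hv]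
      | tmul cz hz =>
        exact mult_assoc_pure act actT cx cy cz hz hact_mulH hactT_mulH hact_alg
          hactT_alg hcomm hx hy

end Act

end S14

/-- double smash product: given a bialgebra `H` over a field `k`, an algebra
`C` which is simultaneously a left `H`-module algebra (for `⊳ = act`) and a left
`H^{cop}`-module algebra (for `⊳̃ = actT`), with the two actions commuting, the `k`-module
`D = C ⊗ H` with multiplication determined bilinearly by
`(c ⊗ h)·(c' ⊗ h') = c·(h⁽¹⁾ ⊳ (h⁽³⁾ ⊳̃ c')) ⊗ h⁽²⁾h'`
is an associative unital algebra with unit `1 ⊗ 1`; the maps `c ↦ c ⊗ 1` and `h ↦ 1 ⊗ h` are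
injective algebra homomorphisms, and `(c ⊗ 1)·(1 ⊗ h) = c ⊗ h`. -/
theorem statement14 {k : Type*} [Field k]
    {H : Type*} [Ring H] [Bialgebra k H]
    {C : Type*} [Ring C] [Algebra k C] [Nontrivial C]
    (act actT : H →ₗ[k] Module.End k C)
    (hact_one : act 1 = LinearMap.id)
    (hact_mulH : ∀ g h : H, act (g * h) = (act g) ∘ₗ (act h))
    (hactT_one : actT 1 = LinearMap.id)
    (hactT_mulH : ∀ g h : H, actT (g * h) = (actT g) ∘ₗ (actT h))
    (hact_alg : ∀ (h : H) (c c' : C), act h (c * c') =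
      LinearMap.mul' k C ((pairEndo act act) (Coalgebra.comul (R := k) h) (c ⊗ₜ[k] c')))
    (hact_unit : ∀ h : H, act h 1 = (Coalgebra.counit (R := k) h) • (1 : C))
    (hactT_alg : ∀ (h : H) (c c' : C), actT h (c * c') =
      LinearMap.mul' k C ((pairEndo actT actT)
        ((TensorProduct.comm k H H) (Coalgebra.comul (R := k) h)) (c ⊗ₜ[k] c')))
    (hactT_unit : ∀ h : H, actT h 1 = (Coalgebra.counit (R := k) h) • (1 : C))
    (hcomm : ∀ (g h : H) (c : C), act g (actT h c) = actT h (act g c)) :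
    ∃ mult : (C ⊗[k] H) →ₗ[k] (C ⊗[k] H) →ₗ[k] (C ⊗[k] H),
      (∀ (c c' : C) (h h' : H),
        mult (c ⊗ₜ h) (c' ⊗ₜ h') =
          TensorProduct.map ((LinearMap.mulLeft k c) ∘ₗ (LinearMap.applyₗ c'))
              (LinearMap.mulRight k h')
            (TensorProduct.map (sandwich act actT) LinearMap.id
              (rearr k H ((LinearMap.rTensor H (Coalgebra.comul (R := k)))
                (Coalgebra.comul (R := k) h))))) ∧
      (∀ x y z : C ⊗[k] H, mult (mult x y) z = mult x (mult y z)) ∧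
      (∀ x : C ⊗[k] H, mult ((1 : C) ⊗ₜ (1 : H)) x = x) ∧
      (∀ x : C ⊗[k] H, mult x ((1 : C) ⊗ₜ (1 : H)) = x) ∧
      (∀ c c' : C, mult (c ⊗ₜ (1 : H)) (c' ⊗ₜ (1 : H)) = (c * c') ⊗ₜ (1 : H)) ∧
      (∀ h h' : H, mult ((1 : C) ⊗ₜ h) ((1 : C) ⊗ₜ h') = (1 : C) ⊗ₜ (h * h')) ∧
      (∀ (c : C) (h : H), mult (c ⊗ₜ (1 : H)) ((1 : C) ⊗ₜ h) = c ⊗ₜ h) ∧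
      Function.Injective (fun c : C => (c ⊗ₜ[k] (1 : H) : C ⊗[k] H)) ∧
      Function.Injective (fun h : H => ((1 : C) ⊗ₜ[k] h : C ⊗[k] H)) := by
  refine ⟨S14.multMap act actT, ?_, ?_, ?_, ?_, ?_, ?_, ?_, ?_, ?_⟩
  · intro c c' h h'
    exact S14.multMap_spec act actT c c' h h'
  · intro x y z
    exact S14.mult_assoc act actT hact_mulH hactT_mulH hact_alg hactT_alg hcomm x y z
  · intro x
    exact S14.mult_one_left act actT hact_one hactT_one x
  · intro x
    exact S14.mult_one_right' act actT hact_unit hactT_unit x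
  · intro c c'
    exact S14.mult_cc act actT hact_one hactT_one c c'
  · intro h h'
    exact S14.mult_hh act actT hact_unit hactT_unit h h'
  · intro c h
    exact S14.mult_ch act actT hact_one hactT_one c h
  · exact S14.inj_C
  · exact S14.inj_H
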